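/- Every discrete profile freezes in finite time: if f is a discrete profile on n agents, then there exists T ∈ ℕ such that U^{T+t} f = U^T f for every t ∈ ℕ. -/

import Mathlib

open MeasureTheory Set

/-- The neighbourhood `N_α(f)` of an agent `α ∈ [0,1]`:
all agents `β ∈ [0,1]` whose opinion is within distance 1 of that of `α`. -/
def nbhdHK (f : ℝ → ℝ) (α : ℝ) : Set ℝ :=
  {β | β ∈ Icc (0:ℝ) 1 ∧ |f β - f α| ≤ 1}

/-- The Hegselmann–Krause updating operator `U`:
`Uf(α)` is the average of `f` over `N_α(f)` if that set has positive Lebesgue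
measure, and `f(α)` otherwise. -/
noncomputable def updateHK (f : ℝ → ℝ) (α : ℝ) : ℝ :=
  if 0 < (volume (nbhdHK f α)).toReal then
    (∫ β in nbhdHK f α, f β) / (volume (nbhdHK f α)).toReal
  else f α

/-- A discrete profile on `n` agents: a profile that is constant on `[0, 1/n]`
and constant on each interval `((i-1)/n, i/n]` for integers `2 ≤ i ≤ n`. -/
def IsDiscreteProfileHK (n : ℕ) (f : ℝ → ℝ) : Prop :=
  MonotoneOn f (Icc 0 1) ∧
  (∀ α ∈ Icc (0:ℝ) (1 / n), f α = f 0) ∧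
  ∀ i : ℕ, 2 ≤ i → i ≤ n →
    ∀ α ∈ Ioc ((i - 1 : ℝ) / n) ((i : ℝ) / n), f α = f ((i : ℝ) / n)


namespace HKP


noncomputable def winS (n : ℕ) (v : ℕ → ℝ) (i : ℕ) : Finset ℕ :=
  (Finset.range n).filter (fun j => |v j - v i| ≤ 1)

noncomputable def Hstep (n : ℕ) (v : ℕ → ℝ) : ℕ → ℝ := fun i =>
  if i < n then (∑ j ∈ winS n v i, v j) / (winS n v i).card else v i

def Sorted (n : ℕ) (v : ℕ → ℝ) : Prop := ∀ i j : ℕ, i ≤ j → j < n → v i ≤ v j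

lemma mem_winS {n : ℕ} {v : ℕ → ℝ} {i j : ℕ} :
    j ∈ winS n v i ↔ j < n ∧ |v j - v i| ≤ 1 := by
  simp [winS]

lemma self_mem_winS {n : ℕ} {v : ℕ → ℝ} {i : ℕ} (hi : i < n) : i ∈ winS n v i := by
  simp [mem_winS, hi]

lemma winS_nonempty {n : ℕ} {v : ℕ → ℝ} {i : ℕ} (hi : i < n) : (winS n v i).Nonempty :=
  ⟨i, self_mem_winS hi⟩

lemma winS_card_pos {n : ℕ} {v : ℕ → ℝ} {i : ℕ} (hi : i < n) : 0 < (winS n v i).card :=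
  Finset.card_pos.2 (winS_nonempty hi)

lemma winS_card_le {n : ℕ} {v : ℕ → ℝ} {i : ℕ} : (winS n v i).card ≤ n := by
  simpa [winS] using Finset.card_le_card (Finset.filter_subset _ (Finset.range n))

lemma Hstep_eq {n : ℕ} {v : ℕ → ℝ} {i : ℕ} (hi : i < n) :
    Hstep n v i = (∑ j ∈ winS n v i, v j) / (winS n v i).card := by
  simp [Hstep, hi]

/-- mean of a nonempty finset with all values ≤ c is ≤ c -/
lemma mean_le {s : Finset ℕ} (v : ℕ → ℝ) (hs : s.Nonempty) (c : ℝ)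
    (h : ∀ x ∈ s, v x ≤ c) : (∑ j ∈ s, v j) / s.card ≤ c := by
  rw [div_le_iff₀ (by exact_mod_cast Finset.card_pos.2 hs)]
  calc ∑ j ∈ s, v j ≤ ∑ j ∈ s, c := Finset.sum_le_sum h
    _ = c * s.card := by rw [Finset.sum_const]; simp [mul_comm]

lemma le_mean {s : Finset ℕ} (v : ℕ → ℝ) (hs : s.Nonempty) (c : ℝ)
    (h : ∀ x ∈ s, c ≤ v x) : c ≤ (∑ j ∈ s, v j) / s.card := by
  rw [le_div_iff₀ (by exact_mod_cast Finset.card_pos.2 hs)]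
  calc c * s.card = ∑ j ∈ s, c := by rw [Finset.sum_const]; simp [mul_comm]
    _ ≤ ∑ j ∈ s, v j := Finset.sum_le_sum h



/-- adding smaller elements to a set can only decrease the mean -/
lemma mean_union_le {P C : Finset ℕ} (v : ℕ → ℝ) (hd : Disjoint P C) (hC : C.Nonempty)
    (h : ∀ x ∈ P, ∀ y ∈ C, v x ≤ v y) :
    (∑ j ∈ P ∪ C, v j) / (P ∪ C).card ≤ (∑ j ∈ C, v j) / C.card := by
  have hCc : (0:ℝ) < C.card := by exact_mod_cast Finset.card_pos.2 hC
  have hUc : (0:ℝ) < (P ∪ C).card := by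
    exact_mod_cast Finset.card_pos.2 (hC.mono Finset.subset_union_right)
  rw [div_le_div_iff₀ hUc hCc]
  rw [Finset.sum_union hd, Finset.card_union_of_disjoint hd]
  push_cast
  have key : (∑ j ∈ P, v j) * C.card ≤ P.card * ∑ j ∈ C, v j := by
    calc (∑ j ∈ P, v j) * C.card = ∑ x ∈ P, ∑ y ∈ C, v x := by
          simp [Finset.sum_const, mul_comm, Finset.sum_mul]
      _ ≤ ∑ x ∈ P, ∑ y ∈ C, v y := by
          apply Finset.sum_le_sum; intro x hx; apply Finset.sum_le_sum; intro y hy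
          exact h x hx y hy
      _ = P.card * ∑ j ∈ C, v j := by simp [Finset.sum_const, mul_comm]
  nlinarith [key]

lemma le_mean_union {C Q : Finset ℕ} (v : ℕ → ℝ) (hd : Disjoint C Q) (hC : C.Nonempty)
    (h : ∀ x ∈ C, ∀ y ∈ Q, v x ≤ v y) :
    (∑ j ∈ C, v j) / C.card ≤ (∑ j ∈ C ∪ Q, v j) / (C ∪ Q).card := by
  have hCc : (0:ℝ) < C.card := by exact_mod_cast Finset.card_pos.2 hC
  have hUc : (0:ℝ) < (C ∪ Q).card := by
    exact_mod_cast Finset.card_pos.2 (hC.mono Finset.subset_union_left)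
  rw [div_le_div_iff₀ hCc hUc]
  rw [Finset.sum_union hd, Finset.card_union_of_disjoint hd]
  push_cast
  have key : (∑ j ∈ C, v j) * Q.card ≤ C.card * ∑ j ∈ Q, v j := by
    calc (∑ j ∈ C, v j) * Q.card = ∑ x ∈ C, ∑ y ∈ Q, v x := by
          simp [Finset.sum_const, mul_comm, Finset.sum_mul]
      _ ≤ ∑ x ∈ C, ∑ y ∈ Q, v y := by
          apply Finset.sum_le_sum; intro x hx; apply Finset.sum_le_sum; intro y hy
          exact h x hx y hy
      _ = C.card * ∑ j ∈ Q, v j := by simp [Finset.sum_const, mul_comm]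
  nlinarith [key]

/-- main mean comparison lemma -/
lemma mean_le_mean {A B : Finset ℕ} (v : ℕ → ℝ) (hA : A.Nonempty) (hB : B.Nonempty)
    (h1 : ∀ x ∈ A \ B, ∀ y ∈ B, v x ≤ v y)
    (h2 : ∀ x ∈ A, ∀ y ∈ B \ A, v x ≤ v y) :
    (∑ j ∈ A, v j) / A.card ≤ (∑ j ∈ B, v j) / B.card := by
  by_cases hC : (A ∩ B).Nonempty
  · have st1 : (∑ j ∈ A, v j) / A.card ≤ (∑ j ∈ A ∩ B, v j) / (A ∩ B).card := by
      have := mean_union_le (P := A \ B) (C := A ∩ B) v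
        (Finset.disjoint_sdiff_inter A B) hC
        (fun x hx y hy => h1 x hx y (Finset.mem_inter.1 hy).2)
      rwa [Finset.sdiff_union_inter] at this
    have st2 : (∑ j ∈ A ∩ B, v j) / (A ∩ B).card ≤ (∑ j ∈ B, v j) / B.card := by
      have := le_mean_union (C := A ∩ B) (Q := B \ A) v
        (by
          refine Finset.disjoint_left.2 ?_
          intro x hx hx'
          exact (Finset.mem_sdiff.1 hx').2 (Finset.mem_inter.1 hx).1)
        hC
        (fun x hx y hy => h2 x (Finset.mem_inter.1 hx).1 y hy)
      have hun : (A ∩ B) ∪ (B \ A) = B := by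
        ext x; simp only [Finset.mem_union, Finset.mem_inter, Finset.mem_sdiff]; tauto
      rwa [hun] at this
    exact st1.trans st2
  · -- A and B disjoint: every element of A = A\B is ≤ every element of B
    have hAB : A \ B = A := by
      rw [Finset.sdiff_eq_self_iff_disjoint]
      rw [Finset.not_nonempty_iff_eq_empty] at hC
      exact Finset.disjoint_iff_inter_eq_empty.2 hC
    have hle : ∀ x ∈ A, v x ≤ (∑ j ∈ B, v j) / B.card := by
      intro x hx
      exact le_mean v hB _ (fun y hy => h1 x (by rw [hAB]; exact hx) y hy)
    exact mean_le v hA _ hle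


lemma sorted_Hstep {n : ℕ} {v : ℕ → ℝ} (hv : Sorted n v) : Sorted n (Hstep n v) := by
  intro i j hij hj
  have hi : i < n := lt_of_le_of_lt hij hj
  rw [Hstep_eq hi, Hstep_eq hj]
  apply mean_le_mean v (winS_nonempty hi) (winS_nonempty hj)
  · intro x hx y hy
    obtain ⟨hxn, hxv⟩ := mem_winS.1 (Finset.mem_sdiff.1 hx).1
    have hxB : ¬ (|v x - v j| ≤ 1) := by
      intro h; exact (Finset.mem_sdiff.1 hx).2 (mem_winS.2 ⟨hxn, h⟩)
    obtain ⟨hyn, hyv⟩ := mem_winS.1 hy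
    have hij' : v i ≤ v j := hv i j hij hj
    have h1 : v x ≤ v i + 1 := by cases abs_le.1 hxv with | intro a b => linarith
    have h2 : v x < v j - 1 := by
      rcases lt_or_ge (v x) (v j - 1) with h | h
      · exact h
      · exfalso; apply hxB; rw [abs_le]; constructor <;> linarith
    have h3 : v j - 1 ≤ v y := by cases abs_le.1 hyv with | intro a b => linarith
    linarith
  · intro x hx y hy
    obtain ⟨hxn, hxv⟩ := mem_winS.1 hx
    obtain ⟨hyn, hyv⟩ := mem_winS.1 (Finset.mem_sdiff.1 hy).1
    have hyA : ¬ (|v y - v i| ≤ 1) := by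
      intro h; exact (Finset.mem_sdiff.1 hy).2 (mem_winS.2 ⟨hyn, h⟩)
    have hij' : v i ≤ v j := hv i j hij hj
    have h1 : v x ≤ v i + 1 := by cases abs_le.1 hxv with | intro a b => linarith
    have h2 : v i + 1 < v y := by
      rcases lt_or_ge (v i + 1) (v y) with h | h
      · exact h
      · exfalso; apply hyA; rw [abs_le]
        have : v j - 1 ≤ v y := by cases abs_le.1 hyv with | intro a b => linarith
        constructor <;> linarith
    linarith

lemma Hstep_eq_of_eq {n : ℕ} {v : ℕ → ℝ} {i j : ℕ} (hi : i < n) (hj : j < n)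
    (h : v i = v j) : Hstep n v i = Hstep n v j := by
  have hw : winS n v i = winS n v j := by unfold winS; rw [h]
  rw [Hstep_eq hi, Hstep_eq hj, hw]

/-- values in the window of `i` are ≤ v i when the gap above i exceeds 1 -/
lemma Hstep_le_of_barrier {n : ℕ} {v : ℕ → ℝ} (hv : Sorted n v) {i : ℕ}
    (hi : i < n) (hgap : ∀ j, j < n → v j ≤ v i + 1 → v j ≤ v i) :
    Hstep n v i ≤ v i := by
  rw [Hstep_eq hi]
  apply mean_le v (winS_nonempty hi)
  intro x hx
  obtain ⟨hxn, hxv⟩ := mem_winS.1 hx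
  have : v x ≤ v i + 1 := by cases abs_le.1 hxv with | intro a b => linarith
  exact hgap x hxn this

lemma Hstep_ge_of_barrier {n : ℕ} {v : ℕ → ℝ} (hv : Sorted n v) {i : ℕ}
    (hi : i < n) (hgap : ∀ j, j < n → v i - 1 ≤ v j → v i ≤ v j) :
    v i ≤ Hstep n v i := by
  rw [Hstep_eq hi]
  apply le_mean v (winS_nonempty hi)
  intro x hx
  obtain ⟨hxn, hxv⟩ := mem_winS.1 hx
  have : v i - 1 ≤ v x := by cases abs_le.1 hxv with | intro a b => linarith
  exact hgap x hxn this

/-- barrier persistence: consecutive gap > 1 is preserved (in fact grows) -/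
lemma barrier_persist {n : ℕ} {v : ℕ → ℝ} (hv : Sorted n v) {i : ℕ}
    (hi : i + 1 < n) (hgap : 1 < v (i+1) - v i) :
    v (i+1) - v i ≤ Hstep n v (i+1) - Hstep n v i := by
  have h1 : Hstep n v i ≤ v i := by
    apply Hstep_le_of_barrier hv (Nat.lt_of_succ_lt hi)
    intro j hj hle
    by_contra hcon
    push_neg at hcon
    have : v (i+1) ≤ v j := by
      by_contra hc2
      push_neg at hc2
      -- v j < v (i+1) and v j > v i ⇒ from sortedness j must be... derive j ≥ i+1 or ≤ i
      rcases le_or_gt j i with h | h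
      · exact absurd (hv j i h (Nat.lt_of_succ_lt hi)) (not_le.2 hcon)
      · exact absurd (hv (i+1) j h hj) (not_le.2 hc2)
    linarith
  have h2 : v (i+1) ≤ Hstep n v (i+1) := by
    apply Hstep_ge_of_barrier hv hi
    intro j hj hle
    by_contra hcon
    push_neg at hcon
    have : v j ≤ v i := by
      rcases le_or_gt j i with h | h
      · exact hv j i h (Nat.lt_of_succ_lt hi)
      · exact absurd (hv (i+1) j h hj) (not_le.2 hcon)
    linarith
  linarith

/-- the global maximum does not increase -/
lemma Hstep_last_le {n : ℕ} {v : ℕ → ℝ} (hv : Sorted n v) (hn : 0 < n) :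
    Hstep n v (n-1) ≤ v (n-1) := by
  have hlt : n - 1 < n := Nat.sub_lt hn Nat.one_pos
  rw [Hstep_eq hlt]
  apply mean_le v (winS_nonempty hlt)
  intro x hx
  obtain ⟨hxn, _⟩ := mem_winS.1 hx
  exact hv x (n-1) (Nat.le_sub_one_of_lt hxn) hlt


/-- if all consecutive gaps are 0 or >1, the profile is frozen -/
lemma Hstep_eq_self {n : ℕ} {v : ℕ → ℝ} (hv : Sorted n v)
    (h : ∀ p, p + 1 < n → v (p+1) = v p ∨ 1 < v (p+1) - v p) :
    Hstep n v = v := by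
  have hchain : ∀ d i, i + d < n → v (i + d) - v i ≤ 1 → v (i + d) = v i := by
    intro d
    induction d with
    | zero => intro i _ _; rfl
    | succ d ih =>
      intro i hin hle
      have hd : i + d < n := by omega
      have hsort : v i ≤ v (i + d) := hv i (i+d) (by omega) hd
      have hsort2 : v (i + d) ≤ v (i + d + 1) := hv (i+d) (i+d+1) (by omega) (by omega)
      rcases h (i + d) (by omega) with heq | hgt
      · have : v (i + d) - v i ≤ 1 := by
          have : v (i + (d+1)) = v (i + d) := by rw [show i + (d+1) = i + d + 1 by omega, heq]
          rw [this] at hle; linarith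
        have := ih i hd this
        rw [show i + (d+1) = i + d + 1 by omega, heq, this]
      · exfalso
        have : v (i + (d+1)) = v (i + d + 1) := by norm_num [show i + (d+1) = i + d + 1 by omega]
        rw [this] at hle
        linarith
  funext i
  by_cases hi : i < n
  · rw [Hstep_eq hi]
    have hall : ∀ j ∈ winS n v i, v j = v i := by
      intro j hj
      obtain ⟨hjn, hjv⟩ := mem_winS.1 hj
      rcases le_total i j with hij | hij
      · obtain ⟨d, rfl⟩ := Nat.exists_eq_add_of_le hij
        exact hchain d i hjn (by cases abs_le.1 hjv with | intro a b => linarith)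
      · obtain ⟨d, rfl⟩ := Nat.exists_eq_add_of_le hij
        have := hchain d j hi (by cases abs_le.1 hjv with | intro a b => linarith)
        rw [this]
    rw [Finset.sum_congr rfl hall, Finset.sum_const, nsmul_eq_mul]
    have hc : ((winS n v i).card : ℝ) ≠ 0 := by
      exact_mod_cast (winS_card_pos hi).ne'
    rw [mul_comm, mul_div_assoc, div_self hc, mul_one]
  · simp [Hstep, hi]

noncomputable def Epairs (n : ℕ) (v : ℕ → ℝ) : Finset (ℕ × ℕ) :=
  ((Finset.range n) ×ˢ (Finset.range n)).filter (fun p => v p.1 = v p.2)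

noncomputable def Bset (n : ℕ) (v : ℕ → ℝ) : Finset ℕ :=
  (Finset.range n).filter (fun i => i + 1 < n ∧ 1 < v (i+1) - v i)

lemma mem_Epairs {n : ℕ} {v : ℕ → ℝ} {p : ℕ × ℕ} :
    p ∈ Epairs n v ↔ p.1 < n ∧ p.2 < n ∧ v p.1 = v p.2 := by
  simp [Epairs, Finset.mem_filter, Finset.mem_product]; tauto

lemma mem_Bset {n : ℕ} {v : ℕ → ℝ} {i : ℕ} :
    i ∈ Bset n v ↔ i + 1 < n ∧ 1 < v (i+1) - v i := by
  simp [Bset, Finset.mem_filter]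
  intro h _; omega

lemma Epairs_subset {n : ℕ} {v : ℕ → ℝ} : Epairs n v ⊆ Epairs n (Hstep n v) := by
  intro p hp
  obtain ⟨h1, h2, h3⟩ := mem_Epairs.1 hp
  exact mem_Epairs.2 ⟨h1, h2, Hstep_eq_of_eq h1 h2 h3⟩

lemma Bset_subset {n : ℕ} {v : ℕ → ℝ} (hv : Sorted n v) : Bset n v ⊆ Bset n (Hstep n v) := by
  intro i hi
  obtain ⟨h1, h2⟩ := mem_Bset.1 hi
  have := barrier_persist hv h1 h2
  exact mem_Bset.2 ⟨h1, by linarith⟩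

/-- a monotone bounded sequence of naturals is eventually constant -/
lemma nat_stab (N : ℕ → ℕ) (hm : Monotone N) (B : ℕ) (hb : ∀ t, N t ≤ B) :
    ∃ t0, ∀ t, t0 ≤ t → N t = N t0 := by
  have hne : (Set.range N).Nonempty := ⟨N 0, 0, rfl⟩
  have hbdd : BddAbove (Set.range N) := ⟨B, by rintro x ⟨t, rfl⟩; exact hb t⟩
  obtain ⟨t0, ht0⟩ := Nat.sSup_mem hne hbdd
  refine ⟨t0, fun t ht => le_antisymm ?_ (hm ht)⟩
  rw [ht0]
  exact le_csSup hbdd ⟨t, rfl⟩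


/-- lower bound for the mean over a window containing a witness -/
lemma Hstep_ge_of_witness {n : ℕ} {v : ℕ → ℝ} {c x : ℕ} {b r : ℝ} (hc : c < n) (hr : 0 ≤ r)
    (hge : ∀ j ∈ winS n v c, b ≤ v j) (hx : x ∈ winS n v c) (hxv : b + r ≤ v x) :
    b + r / n ≤ Hstep n v c := by
  have hm : 0 < (winS n v c).card := winS_card_pos hc
  have hmn : (winS n v c).card ≤ n := winS_card_le
  have hmR : (0:ℝ) < (winS n v c).card := by exact_mod_cast hm
  have hsum : ((winS n v c).card : ℝ) * b + r ≤ ∑ j ∈ winS n v c, v j := by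
    have h2 : v x + ∑ j ∈ (winS n v c).erase x, v j = ∑ j ∈ winS n v c, v j :=
      Finset.add_sum_erase _ v hx
    have h1 : ((winS n v c).erase x).card • b ≤ ∑ j ∈ (winS n v c).erase x, v j :=
      Finset.card_nsmul_le_sum _ _ _ (fun j hj => hge j (Finset.erase_subset _ _ hj))
    rw [Finset.card_erase_of_mem hx, nsmul_eq_mul] at h1
    have hcast : (((winS n v c).card - 1 : ℕ) : ℝ) = ((winS n v c).card : ℝ) - 1 := by
      have := Nat.one_le_iff_ne_zero.2 hm.ne'
      push_cast [Nat.cast_sub this]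
      ring
    rw [hcast] at h1
    linarith
  have step1 : b + r / (winS n v c).card ≤ Hstep n v c := by
    rw [Hstep_eq hc, le_div_iff₀ hmR]
    have : (b + r / (winS n v c).card) * (winS n v c).card
        = ((winS n v c).card : ℝ) * b + r := by
      field_simp
    rw [this]; exact hsum
  have step2 : r / n ≤ r / (winS n v c).card := by
    apply div_le_div_of_nonneg_left hr hmR
    exact_mod_cast hmn
  linarith

theorem discrete_freeze (n : ℕ) (hn : 0 < n) (v0 : ℕ → ℝ) (hv0 : Sorted n v0) :
    ∃ T : ℕ, Hstep n ((Hstep n)^[T] v0) = (Hstep n)^[T] v0 := by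
  by_contra hcon
  push_neg at hcon
  set w : ℕ → ℕ → ℝ := fun t => (Hstep n)^[t] v0 with hw
  have hwsucc : ∀ t, w (t+1) = Hstep n (w t) := fun t => Function.iterate_succ_apply' _ _ _
  have hsort : ∀ t, Sorted n (w t) := by
    intro t
    induction t with
    | zero => exact hv0
    | succ t ih => rw [hwsucc]; exact sorted_Hstep ih
  have hEchain : ∀ s t : ℕ, s ≤ t → Epairs n (w s) ⊆ Epairs n (w t) := by
    intro s t hst
    induction t, hst using Nat.le_induction with
    | base => exact Finset.Subset.refl _
    | succ t hst ih =>
      refine ih.trans ?_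
      rw [hwsucc]; exact Epairs_subset
  have hBchain : ∀ s t : ℕ, s ≤ t → Bset n (w s) ⊆ Bset n (w t) := by
    intro s t hst
    induction t, hst using Nat.le_induction with
    | base => exact Finset.Subset.refl _
    | succ t hst ih =>
      refine ih.trans ?_
      rw [hwsucc]; exact Bset_subset (hsort t)
  obtain ⟨t0, ht0⟩ := nat_stab
    (fun t => (Epairs n (w t)).card + (Bset n (w t)).card)
    (monotone_nat_of_le_succ (fun t => by
      have h1 := Finset.card_le_card (hEchain t (t+1) (Nat.le_succ t))
      have h2 := Finset.card_le_card (hBchain t (t+1) (Nat.le_succ t))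
      omega))
    (n * n + n)
    (fun t => by
      have h1 : (Epairs n (w t)).card ≤ n * n := by
        have := Finset.card_filter_le ((Finset.range n) ×ˢ (Finset.range n))
          (fun p => w t p.1 = w t p.2)
        simpa [Epairs, Finset.card_product] using this
      have h2 : (Bset n (w t)).card ≤ n := by
        have := Finset.card_filter_le (Finset.range n)
          (fun i => i + 1 < n ∧ 1 < w t (i+1) - w t i)
        simpa [Bset] using this
      show (Epairs n (w t)).card + (Bset n (w t)).card ≤ n * n + n
      omega)
  have hEconst : ∀ t, t0 ≤ t → Epairs n (w t) = Epairs n (w t0) := by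
    intro t ht
    have hsub := hEchain t0 t ht
    have hsubB := hBchain t0 t ht
    have hN := ht0 t ht
    have h1 := Finset.card_le_card hsub
    have h2 := Finset.card_le_card hsubB
    exact (Finset.eq_of_subset_of_card_le hsub (by omega)).symm
  have hBconst : ∀ t, t0 ≤ t → Bset n (w t) = Bset n (w t0) := by
    intro t ht
    have hsub := hEchain t0 t ht
    have hsubB := hBchain t0 t ht
    have hN := ht0 t ht
    have h1 := Finset.card_le_card hsub
    have h2 := Finset.card_le_card hsubB
    exact (Finset.eq_of_subset_of_card_le hsubB (by omega)).symm
  -- a middle pair exists at time t0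
  obtain ⟨p, hp1, hp2, hp3⟩ :
      ∃ p, p + 1 < n ∧ 0 < w t0 (p+1) - w t0 p ∧ w t0 (p+1) - w t0 p ≤ 1 := by
    by_contra hmid
    push_neg at hmid
    refine hcon t0 ?_
    refine Hstep_eq_self (hsort t0) ?_
    intro q hq
    rcases le_or_gt (w t0 (q+1) - w t0 q) 0 with h | h
    · left
      have := (hsort t0) q (q+1) (Nat.le_succ q) hq
      linarith
    · right
      exact hmid q hq h
  -- definition of a (bottom of the component of p)
  classical
  have hexa : ∃ i, ∀ c, i ≤ c → c < p → w t0 (c+1) - w t0 c ≤ 1 :=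
    ⟨p, fun c h1 h2 => absurd h2 (not_lt.2 h1)⟩
  set a := Nat.find hexa with ha
  have hPa : ∀ c, a ≤ c → c < p → w t0 (c+1) - w t0 c ≤ 1 := Nat.find_spec hexa
  have ha_le : a ≤ p := Nat.find_min' hexa (fun c h1 h2 => absurd h2 (not_lt.2 h1))
  have ha_lt : a < n := by omega
  have hbar0 : a ≠ 0 → 1 < w t0 a - w t0 (a-1) := by
    intro ha0
    have hlt : a - 1 < a := by omega
    have := Nat.find_min hexa hlt
    push_neg at this
    obtain ⟨c, hc1, hc2, hc3⟩ := this
    have hca : c = a - 1 := by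
      by_contra hne
      have : a ≤ c := by omega
      exact absurd (hPa c this hc2) (not_le.2 hc3)
    rw [hca] at hc3
    rw [show a - 1 + 1 = a by omega] at hc3
    exact hc3
  -- definition of u (first index with strictly larger value)
  have hexu : ∃ j, a < j ∧ j < n ∧ w t0 a < w t0 j := by
    refine ⟨p + 1, by omega, hp1, ?_⟩
    have := (hsort t0) a p ha_le (by omega)
    linarith
  set u := Nat.find hexu with hu
  obtain ⟨hau, hun, hav⟩ : a < u ∧ u < n ∧ w t0 a < w t0 u := Nat.find_spec hexu
  have hu_le : u ≤ p + 1 := Nat.find_min' hexu (by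
    refine ⟨by omega, hp1, ?_⟩
    have := (hsort t0) a p ha_le (by omega)
    linarith)
  have hval_eq0 : w t0 (u-1) = w t0 a := by
    rcases Nat.lt_or_ge a (u-1) with h | h
    · have hlt : u - 1 < u := by omega
      have := Nat.find_min hexu hlt
      push_neg at this
      have h1 := this h (by omega)
      have h2 := (hsort t0) a (u-1) (by omega) (by omega)
      linarith
    · have : u - 1 = a := by omega
      rw [this]
  have hgap_u0 : w t0 u - w t0 (u-1) ≤ 1 := by
    rcases Nat.lt_or_ge (u-1) p with h | h
    · have := hPa (u-1) (by omega) h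
      rw [show u - 1 + 1 = u by omega] at this
      exact this
    · have hup : u - 1 = p := by omega
      rw [hup]
      rw [show p + 1 = u by omega] at hp3
      exact hp3
  -- persistence facts for all t ≥ t0
  have hforever : ∀ t, t0 ≤ t →
      w t (u-1) = w t a ∧ w t a < w t u ∧ w t u - w t a ≤ 1 ∧
      (a ≠ 0 → 1 < w t a - w t (a-1)) := by
    intro t ht
    have hE := hEconst t ht
    have hB := hBconst t ht
    have heq : w t (u-1) = w t a := by
      have hmem : ((u-1 : ℕ), a) ∈ Epairs n (w t0) :=
        mem_Epairs.2 ⟨by omega, ha_lt, hval_eq0⟩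
      rw [← hE] at hmem
      exact (mem_Epairs.1 hmem).2.2
    have hneq : w t a ≠ w t u := by
      intro hc
      have hmem : ((a : ℕ), u) ∈ Epairs n (w t) := mem_Epairs.2 ⟨ha_lt, hun, hc⟩
      rw [hE] at hmem
      have := (mem_Epairs.1 hmem).2.2
      linarith
    have hlt : w t a < w t u :=
      lt_of_le_of_ne ((hsort t) a u (by omega) hun) hneq
    have hgle : w t u - w t a ≤ 1 := by
      by_contra hgt
      push_neg at hgt
      have hmem : u - 1 ∈ Bset n (w t) := by
        refine mem_Bset.2 ⟨by omega, ?_⟩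
        rw [show u - 1 + 1 = u by omega, heq]
        exact hgt
      rw [hB] at hmem
      have := (mem_Bset.1 hmem).2
      rw [show u - 1 + 1 = u by omega, hval_eq0] at this
      linarith
    have hbart : a ≠ 0 → 1 < w t a - w t (a-1) := by
      intro ha0
      have hmem : a - 1 ∈ Bset n (w t0) := by
        refine mem_Bset.2 ⟨by omega, ?_⟩
        rw [show a - 1 + 1 = a by omega]
        exact hbar0 ha0
      rw [← hB] at hmem
      have := (mem_Bset.1 hmem).2
      rw [show a - 1 + 1 = a by omega] at this
      exact this
    exact ⟨heq, hlt, hgle, hbart⟩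
  -- window facts
  have hwge : ∀ t, t0 ≤ t → ∀ j, j < n → w t a - 1 ≤ w t j → w t a ≤ w t j := by
    intro t ht j hj hge
    rcases Nat.eq_zero_or_pos a with h0 | h0
    · rw [h0]; exact (hsort t) 0 j (Nat.zero_le j) hj
    · have hbart := (hforever t ht).2.2.2 (by omega)
      by_contra hcc
      push_neg at hcc
      have hja : j < a := by
        by_contra hja
        push_neg at hja
        exact absurd ((hsort t) a j hja hj) (not_le.2 hcc)
      have := (hsort t) j (a-1) (by omega) (by omega)
      linarith
  -- key step lower bounds
  have hstep_a : ∀ t, t0 ≤ t →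
      w t a + (w t u - w t a) / n ≤ w (t+1) a := by
    intro t ht
    obtain ⟨heq, hlt, hgle, _⟩ := hforever t ht
    rw [hwsucc]
    refine Hstep_ge_of_witness ha_lt (by linarith) ?_ (x := u) ?_ (by linarith)
    · intro j hj
      obtain ⟨hjn, hjv⟩ := mem_winS.1 hj
      refine hwge t ht j hjn ?_
      cases abs_le.1 hjv with | intro h1 h2 => linarith
    · refine mem_winS.2 ⟨hun, ?_⟩
      rw [abs_le]; constructor <;> linarith
  have hstep_u : ∀ t, t0 ≤ t → w t a + 1 / n ≤ w (t+1) u := by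
    intro t ht
    obtain ⟨heq, hlt, hgle, _⟩ := hforever t ht
    obtain ⟨heq', hlt', _, _⟩ := hforever (t+1) (by omega)
    -- the windows of a and u differ
    have hWsub : winS n (w t) a ⊆ winS n (w t) u := by
      intro j hj
      obtain ⟨hjn, hjv⟩ := mem_winS.1 hj
      have h1 : w t a ≤ w t j := by
        refine hwge t ht j hjn ?_
        cases abs_le.1 hjv with | intro h1 h2 => linarith
      refine mem_winS.2 ⟨hjn, ?_⟩
      rw [abs_le]
      cases abs_le.1 hjv with | intro h3 h4 => constructor <;> linarith
    have hWne : winS n (w t) a ≠ winS n (w t) u := by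
      intro hc
      have : w (t+1) a = w (t+1) u := by
        rw [hwsucc, Hstep_eq ha_lt, Hstep_eq hun, hc]
      linarith
    obtain ⟨j, hjmem, hjnot⟩ := Finset.exists_of_ssubset (ssubset_of_subset_of_ne hWsub hWne)
    obtain ⟨hjn, hjv⟩ := mem_winS.1 hjmem
    have hja : w t a ≤ w t j := by
      refine hwge t ht j hjn ?_
      cases abs_le.1 hjv with | intro h1 h2 => linarith
    have hjfar : w t a + 1 < w t j := by
      by_contra hc
      push_neg at hc
      refine hjnot (mem_winS.2 ⟨hjn, ?_⟩)
      rw [abs_le]; constructor <;> linarith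
    rw [hwsucc]
    refine Hstep_ge_of_witness hun (by norm_num) ?_ hjmem (by linarith)
    intro j' hj'
    obtain ⟨hj'n, hj'v⟩ := mem_winS.1 hj'
    refine hwge t ht j' hj'n ?_
    cases abs_le.1 hj'v with | intro h1 h2 => linarith
  -- boundedness of w t a
  have hbound : ∀ s : ℕ, w (t0 + s) a ≤ w t0 (n-1) := by
    intro s
    have hmax : ∀ s : ℕ, w (t0 + s) (n-1) ≤ w t0 (n-1) := by
      intro s
      induction s with
      | zero => simp
      | succ s ih =>
        rw [show t0 + (s+1) = (t0 + s) + 1 by omega, hwsucc]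
        exact le_trans (Hstep_last_le (hsort _) hn) ih
    exact le_trans ((hsort _) a (n-1) (by omega) (by omega)) (hmax s)
  -- convergence
  set A : ℕ → ℝ := fun s => w (t0 + s) a with hA
  have hAmono : Monotone A := by
    apply monotone_nat_of_le_succ
    intro s
    have h := hstep_a (t0 + s) (by omega)
    have hg0 : 0 ≤ w (t0+s) u - w (t0+s) a := by
      have := (hforever (t0+s) (by omega)).2.1
      linarith
    have hdiv : 0 ≤ (w (t0+s) u - w (t0+s) a) / n :=
      div_nonneg hg0 (Nat.cast_nonneg n)
    show w (t0 + s) a ≤ w (t0 + (s+1)) a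
    rw [show t0 + (s+1) = (t0 + s) + 1 from by omega]
    linarith
  have hAbdd : BddAbove (Set.range A) := ⟨w t0 (n-1), by rintro x ⟨s, rfl⟩; exact hbound s⟩
  have hAconv : Filter.Tendsto A Filter.atTop (nhds (⨆ s, A s)) :=
    tendsto_atTop_ciSup hAmono hAbdd
  have hAconv' : Filter.Tendsto (fun s => A (s+1)) Filter.atTop (nhds (⨆ s, A s)) :=
    (Filter.tendsto_add_atTop_iff_nat 1).2 hAconv
  set d : ℕ → ℝ := fun s => A (s+1) - A s with hd
  have hdconv : Filter.Tendsto d Filter.atTop (nhds 0) := by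
    have := hAconv'.sub hAconv
    simpa using this
  set g : ℕ → ℝ := fun s => w (t0 + s) u - w (t0 + s) a with hg
  have hgpos : ∀ s, 0 ≤ g s := fun s => le_of_lt (by
    have := (hforever (t0+s) (by omega)).2.1
    simp only [hg]; linarith)
  have hgd : ∀ s, g s ≤ n * d s := by
    intro s
    have h := hstep_a (t0 + s) (by omega)
    have hnR : (0:ℝ) < n := by exact_mod_cast hn
    have : g s / n ≤ d s := by
      show (w (t0+s) u - w (t0+s) a) / n ≤ w (t0 + (s+1)) a - w (t0+s) a
      rw [show t0 + (s+1) = (t0 + s) + 1 from by omega]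
      linarith
    calc g s = n * (g s / n) := by field_simp
      _ ≤ n * d s := by
        apply mul_le_mul_of_nonneg_left this (le_of_lt hnR)
  have hgconv : Filter.Tendsto g Filter.atTop (nhds 0) := by
    apply squeeze_zero hgpos hgd
    have := hdconv.const_mul (n : ℝ)
    simpa using this
  -- final contradiction
  have hkey : ∀ s, 1 / (n:ℝ) ≤ g (s+1) + d s := by
    intro s
    have h := hstep_u (t0 + s) (by omega)
    show 1 / (n:ℝ) ≤ (w (t0+(s+1)) u - w (t0+(s+1)) a) + (w (t0+(s+1)) a - w (t0+s) a)
    rw [show t0 + (s+1) = (t0 + s) + 1 from by omega]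
    linarith
  have hlim : Filter.Tendsto (fun s => g (s+1) + d s) Filter.atTop (nhds 0) := by
    have h1 : Filter.Tendsto (fun s => g (s+1)) Filter.atTop (nhds 0) :=
      (Filter.tendsto_add_atTop_iff_nat 1).2 hgconv
    simpa using h1.add hdconv
  have : (1 : ℝ) / n ≤ 0 := ge_of_tendsto' hlim hkey  -- check direction
  have hnR : (0:ℝ) < n := by exact_mod_cast hn
  have : (0:ℝ) < 1 / n := by positivity
  linarith



def blockS (n : ℕ) (j : ℕ) : Set ℝ :=
  if j = 0 then Set.Icc 0 (1/(n:ℝ)) else Set.Ioc ((j:ℝ)/n) ((j+1:ℝ)/n)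

noncomputable def idx (n : ℕ) (α : ℝ) : ℕ := (⌈α * n⌉).toNat - 1

noncomputable def stepFun (n : ℕ) (v : ℕ → ℝ) : ℝ → ℝ := fun α => v (idx n α)

variable {n : ℕ}

lemma blockS_measurable (j : ℕ) : MeasurableSet (blockS n j) := by
  unfold blockS
  split
  · exact measurableSet_Icc
  · exact measurableSet_Ioc

lemma blockS_volume (hn : 0 < n) (j : ℕ) :
    volume (blockS n j) = ENNReal.ofReal (1/(n:ℝ)) := by
  have hnR : (0:ℝ) < n := by exact_mod_cast hn
  unfold blockS
  split
  · rw [Real.volume_Icc]; norm_num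
  · rw [Real.volume_Ioc]
    congr 1
    field_simp
    ring

lemma blockS_subset (hn : 0 < n) {j : ℕ} (hj : j < n) : blockS n j ⊆ Set.Icc 0 1 := by
  have hnR : (0:ℝ) < n := by exact_mod_cast hn
  unfold blockS
  split
  · apply Set.Icc_subset_Icc le_rfl
    rw [div_le_one hnR]
    exact_mod_cast hn
  · intro x hx
    obtain ⟨h1, h2⟩ := hx
    constructor
    · have : (0:ℝ) ≤ (j:ℝ)/n := by positivity
      linarith
    · have hj1 : ((j:ℝ)+1) ≤ n := by exact_mod_cast hj
      have : ((j:ℝ)+1)/n ≤ 1 := by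
        rw [div_le_one hnR]; exact hj1
      linarith

lemma blockS_disjoint (hn : 0 < n) {j j' : ℕ} (hne : j ≠ j') :
    Disjoint (blockS n j) (blockS n j') := by
  have hnR : (0:ℝ) < n := by exact_mod_cast hn
  -- wlog j < j'
  have key : ∀ j j' : ℕ, j < j' → Disjoint (blockS n j) (blockS n j') := by
    intro j j' hlt
    rw [Set.disjoint_left]
    intro x hx hx'
    have hj'0 : j' ≠ 0 := by omega
    have hx'1 : (j':ℝ)/n < x := by
      have : blockS n j' = Set.Ioc ((j':ℝ)/n) ((j'+1:ℝ)/n) := by unfold blockS; simp [hj'0]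
      rw [this] at hx'
      exact hx'.1
    by_cases hj0 : j = 0
    · have : x ≤ 1/(n:ℝ) := by
        have : blockS n j = Set.Icc 0 (1/(n:ℝ)) := by unfold blockS; simp [hj0]
        rw [this] at hx
        exact hx.2
      have h1 : (1:ℝ)/n ≤ (j':ℝ)/n := by
        gcongr
        exact_mod_cast Nat.one_le_iff_ne_zero.2 hj'0
      linarith
    · have : x ≤ ((j:ℝ)+1)/n := by
        have : blockS n j = Set.Ioc ((j:ℝ)/n) ((j+1:ℝ)/n) := by unfold blockS; simp [hj0]
        rw [this] at hx
        exact hx.2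
      have h1 : ((j:ℝ)+1)/n ≤ (j':ℝ)/n := by
        gcongr
        exact_mod_cast hlt
      linarith
  rcases Nat.lt_or_ge j j' with h | h
  · exact key j j' h
  · exact (key j' j (by omega)).symm

lemma idx_of_mem_blockS (hn : 0 < n) {j : ℕ} (hj : j < n) {β : ℝ} (hβ : β ∈ blockS n j) :
    idx n β = j := by
  have hnR : (0:ℝ) < n := by exact_mod_cast hn
  by_cases hj0 : j = 0
  · subst hj0
    have hβ' : β ∈ Set.Icc 0 (1/(n:ℝ)) := by
      have : blockS n 0 = Set.Icc 0 (1/(n:ℝ)) := by unfold blockS; simp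
      rwa [this] at hβ
    have h1 : β * n ≤ 1 := by
      rw [← le_div_iff₀ hnR]
      exact hβ'.2
    have : ⌈β * (n:ℝ)⌉ ≤ 1 := Int.ceil_le.2 (by exact_mod_cast h1)
    unfold idx
    omega
  · have hβ' : β ∈ Set.Ioc ((j:ℝ)/n) ((j+1:ℝ)/n) := by
      have : blockS n j = Set.Ioc ((j:ℝ)/n) ((j+1:ℝ)/n) := by unfold blockS; simp [hj0]
      rwa [this] at hβ
    have h1 : (j:ℝ) < β * n := by
      rw [← div_lt_iff₀ hnR]
      exact hβ'.1
    have h2 : β * n ≤ (j:ℝ) + 1 := by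
      rw [← le_div_iff₀ hnR]
      exact hβ'.2
    have hceil : ⌈β * (n:ℝ)⌉ = (j:ℤ) + 1 := by
      apply le_antisymm
      · apply Int.ceil_le.2
        push_cast
        exact h2
      · rw [Int.add_one_le_iff]
        apply Int.lt_ceil.2
        push_cast
        exact h1
    unfold idx
    rw [hceil]
    omega

lemma mem_blockS_idx (hn : 0 < n) {β : ℝ} (hβ : β ∈ Set.Icc (0:ℝ) 1) :
    idx n β < n ∧ β ∈ blockS n (idx n β) := by
  have hnR : (0:ℝ) < n := by exact_mod_cast hn
  have hx0 : 0 ≤ β * n := mul_nonneg hβ.1 (le_of_lt hnR)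
  have hxn : β * n ≤ n := by
    calc β * n ≤ 1 * n := by apply mul_le_mul_of_nonneg_right hβ.2 (le_of_lt hnR)
      _ = n := one_mul _
  have hm0 : 0 ≤ ⌈β * (n:ℝ)⌉ := Int.ceil_nonneg hx0
  have hmn : ⌈β * (n:ℝ)⌉ ≤ (n:ℤ) := Int.ceil_le.2 (by exact_mod_cast hxn)
  rcases le_or_gt (⌈β * (n:ℝ)⌉) 1 with hm1 | hm2
  · have hidx : idx n β = 0 := by unfold idx; omega
    rw [hidx]
    refine ⟨hn, ?_⟩
    have hble : β ≤ 1/(n:ℝ) := by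
      rw [le_div_iff₀ hnR]
      have := Int.le_ceil (β * (n:ℝ))
      have h1 : β * n ≤ (⌈β * (n:ℝ)⌉ : ℝ) := this
      have h2 : ((⌈β * (n:ℝ)⌉ : ℤ) : ℝ) ≤ 1 := by exact_mod_cast hm1
      linarith
    have : blockS n 0 = Set.Icc 0 (1/(n:ℝ)) := by unfold blockS; simp
    rw [this]
    exact ⟨hβ.1, hble⟩
  · set m := ⌈β * (n:ℝ)⌉ with hm
    set j := m.toNat - 1 with hj
    have hidx : idx n β = j := rfl
    have hj1 : 1 ≤ j := by omega
    have hjn : j < n := by omega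
    have hjR : (j:ℝ) = (m:ℝ) - 1 := by
      have : (j:ℤ) = m - 1 := by omega
      exact_mod_cast congrArg (fun z : ℤ => (z:ℝ)) this
    refine ⟨hidx ▸ hjn, ?_⟩
    rw [hidx]
    have hb : blockS n j = Set.Ioc ((j:ℝ)/n) ((j+1:ℝ)/n) := by
      unfold blockS; simp [show j ≠ 0 by omega]
    rw [hb]
    constructor
    · rw [div_lt_iff₀ hnR, hjR]
      have := Int.ceil_lt_add_one (β * (n:ℝ))
      push_cast at this ⊢
      linarith
    · rw [le_div_iff₀ hnR, hjR]
      have := Int.le_ceil (β * (n:ℝ))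
      push_cast at this ⊢
      linarith

lemma nbhd_stepFun (hn : 0 < n) (v : ℕ → ℝ) {α : ℝ} (hα : α ∈ Set.Icc (0:ℝ) 1) :
    nbhdHK (stepFun n v) α = ⋃ j ∈ winS n v (idx n α), blockS n j := by
  ext β
  simp only [nbhdHK, Set.mem_setOf_eq, Set.mem_iUnion, exists_prop]
  constructor
  · rintro ⟨hβ, hcond⟩
    obtain ⟨hidxn, hidxmem⟩ := mem_blockS_idx hn hβ
    refine ⟨idx n β, ?_, hidxmem⟩
    exact mem_winS.2 ⟨hidxn, hcond⟩
  · rintro ⟨j, hj, hβ⟩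
    obtain ⟨hjn, hjv⟩ := mem_winS.1 hj
    have hβI : β ∈ Set.Icc (0:ℝ) 1 := blockS_subset hn hjn hβ
    have : idx n β = j := idx_of_mem_blockS hn hjn hβ
    refine ⟨hβI, ?_⟩
    show |v (idx n β) - v (idx n α)| ≤ 1
    rw [this]
    exact hjv

lemma volume_biUnion_blocks (hn : 0 < n) (s : Finset ℕ) :
    volume (⋃ j ∈ s, blockS n j) = ENNReal.ofReal ((s.card : ℝ)/(n:ℝ)) := by
  have hnR : (0:ℝ) < n := by exact_mod_cast hn
  rw [measure_biUnion_finset ?_ (fun j _ => blockS_measurable j)]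
  · rw [Finset.sum_congr rfl (fun j _ => blockS_volume hn j), Finset.sum_const, nsmul_eq_mul]
    rw [← ENNReal.ofReal_natCast s.card, ← ENNReal.ofReal_mul (by positivity)]
    congr 1
    field_simp
  · intro j _ j' _ hne
    exact blockS_disjoint hn hne

lemma integral_biUnion_blocks (hn : 0 < n) (v : ℕ → ℝ) (s : Finset ℕ) (hs : ∀ j ∈ s, j < n) :
    ∫ β in (⋃ j ∈ s, blockS n j), stepFun n v β
      = (∑ j ∈ s, v j) / n := by
  have hnR : (0:ℝ) < n := by exact_mod_cast hn
  rw [MeasureTheory.integral_biUnion_finset s (fun j _ => blockS_measurable j)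
    (fun j _ j' _ hne => blockS_disjoint hn hne) ?_]
  · have hterm : ∀ j ∈ s, (∫ β in blockS n j, stepFun n v β) = v j / n := by
      intro j hj
      have heq : Set.EqOn (stepFun n v) (fun _ => v j) (blockS n j) := by
        intro x hx
        show v (idx n x) = v j
        rw [idx_of_mem_blockS hn (hs j hj) hx]
      rw [MeasureTheory.setIntegral_congr_fun (blockS_measurable j) heq,
        MeasureTheory.setIntegral_const, measureReal_def, blockS_volume hn j,
        ENNReal.toReal_ofReal (by positivity), smul_eq_mul]
      ring
    rw [Finset.sum_congr rfl hterm, ← Finset.sum_div]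
  · intro j hj
    apply MeasureTheory.IntegrableOn.congr_fun ?_ ?_ (blockS_measurable j)
    · exact fun _ => v j
    · rw [MeasureTheory.integrableOn_const_iff]
      right
      rw [blockS_volume hn j]
      exact ENNReal.ofReal_lt_top
    · intro x hx
      show v j = v (idx n x)
      rw [idx_of_mem_blockS hn (hs j hj) hx]

lemma updateHK_stepFun (hn : 0 < n) (v : ℕ → ℝ) {g : ℝ → ℝ}
    (hg : Set.EqOn g (stepFun n v) (Set.Icc 0 1)) {α : ℝ} (hα : α ∈ Set.Icc (0:ℝ) 1) :
    updateHK g α = stepFun n (Hstep n v) α := by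
  have hnR : (0:ℝ) < n := by exact_mod_cast hn
  have hidxn : idx n α < n := (mem_blockS_idx hn hα).1
  have hset : nbhdHK g α = ⋃ j ∈ winS n v (idx n α), blockS n j := by
    rw [← nbhd_stepFun hn v hα]
    ext β
    simp only [nbhdHK, Set.mem_setOf_eq]
    constructor
    · rintro ⟨hβ, hc⟩
      exact ⟨hβ, by rwa [← hg hβ, ← hg hα]⟩
    · rintro ⟨hβ, hc⟩
      exact ⟨hβ, by rwa [hg hβ, hg hα]⟩
  have hvol : volume (nbhdHK g α)
      = ENNReal.ofReal (((winS n v (idx n α)).card : ℝ)/(n:ℝ)) := by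
    rw [hset]; exact volume_biUnion_blocks hn _
  have hcard : (0:ℝ) < ((winS n v (idx n α)).card : ℝ) := by
    exact_mod_cast winS_card_pos hidxn
  have hvolR : (volume (nbhdHK g α)).toReal = ((winS n v (idx n α)).card : ℝ)/(n:ℝ) := by
    rw [hvol, ENNReal.toReal_ofReal (by positivity)]
  have hpos : 0 < (volume (nbhdHK g α)).toReal := by
    rw [hvolR]; positivity
  have hint : ∫ β in nbhdHK g α, g β = (∑ j ∈ winS n v (idx n α), v j) / n := by
    have hmeas : MeasurableSet (⋃ j ∈ winS n v (idx n α), blockS n j) :=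
      (winS n v (idx n α)).measurableSet_biUnion (fun j _ => blockS_measurable j)
    rw [hset]
    rw [MeasureTheory.setIntegral_congr_fun hmeas (fun x hx => ?_)]
    · exact integral_biUnion_blocks hn v _ (fun j hj => (mem_winS.1 hj).1)
    · apply hg
      simp only [Set.mem_iUnion, exists_prop] at hx
      obtain ⟨j, hj, hxj⟩ := hx
      exact blockS_subset hn (mem_winS.1 hj).1 hxj
  unfold updateHK
  rw [if_pos hpos, hint, hvolR]
  show _ = Hstep n v (idx n α)
  rw [Hstep_eq hidxn]
  have hcne : ((winS n v (idx n α)).card : ℝ) ≠ 0 := ne_of_gt hcard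
  field_simp


end HKP

/-- every discrete profile freezes in finite time: there is `T` with
`U^{T+t} f = U^T f` for all `t`. -/
theorem stmt5 (n : ℕ) (hn : 1 ≤ n) (f : ℝ → ℝ) (hf : IsDiscreteProfileHK n f) :
    ∃ T : ℕ, ∀ t : ℕ, EqOn (updateHK^[T + t] f) (updateHK^[T] f) (Icc 0 1) := by
  obtain ⟨hmono, h0, hblocks⟩ := hf
  have hn0 : 0 < n := hn
  have hnR : (0:ℝ) < n := by exact_mod_cast hn
  set v0 : ℕ → ℝ := fun i => f (((i:ℝ)+1)/n) with hv0def
  have hptmem : ∀ i : ℕ, i < n → ((i:ℝ)+1)/n ∈ Icc (0:ℝ) 1 := by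
    intro i hi
    constructor
    · positivity
    · rw [div_le_one hnR]
      have : (i:ℝ) + 1 ≤ n := by exact_mod_cast hi
      linarith
  have hv0 : HKP.Sorted n v0 := by
    intro i j hij hj
    apply hmono (hptmem i (lt_of_le_of_lt hij hj)) (hptmem j hj)
    gcongr
  have hinit : EqOn f (HKP.stepFun n v0) (Icc 0 1) := by
    intro α hα
    obtain ⟨hidxn, hmem⟩ := HKP.mem_blockS_idx hn0 hα
    show f α = v0 (HKP.idx n α)
    by_cases hj0 : HKP.idx n α = 0
    · rw [hj0] at hmem ⊢
      have hb0 : HKP.blockS n 0 = Icc 0 (1/(n:ℝ)) := by unfold HKP.blockS; simp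
      rw [hb0] at hmem
      have h1 : f α = f 0 := h0 α hmem
      have h2 : v0 0 = f 0 := by
        have : ((0:ℕ):ℝ) + 1 = 1 := by norm_num
        show f ((((0:ℕ):ℝ)+1)/n) = f 0
        rw [this]
        exact h0 (1/(n:ℝ)) ⟨by positivity, le_refl _⟩
      rw [h1, h2]
    · set j := HKP.idx n α with hjdef
      have hb : HKP.blockS n j = Ioc ((j:ℝ)/n) (((j:ℝ)+1)/n) := by
        unfold HKP.blockS; simp [hj0]
      rw [hb] at hmem
      have key := hblocks (j+1) (by omega) (by omega) α ?_
      · rw [key]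
        show f ((((j+1:ℕ)):ℝ)/n) = f (((j:ℝ)+1)/n)
        norm_num
      · constructor
        · have : (((j+1:ℕ)):ℝ) - 1 = (j:ℝ) := by push_cast; ring
          rw [this]
          exact hmem.1
        · have : (((j+1:ℕ)):ℝ) = (j:ℝ) + 1 := by push_cast; ring
          rw [this]
          exact hmem.2
  have hiter : ∀ t, EqOn (updateHK^[t] f) (HKP.stepFun n ((HKP.Hstep n)^[t] v0)) (Icc 0 1) := by
    intro t
    induction t with
    | zero => exact hinit
    | succ t ih =>
      intro α hα
      rw [Function.iterate_succ_apply', Function.iterate_succ_apply']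
      exact HKP.updateHK_stepFun hn0 _ ih hα
  obtain ⟨T, hT⟩ := HKP.discrete_freeze n hn0 v0 hv0
  have hfix : ∀ t, (HKP.Hstep n)^[T + t] v0 = (HKP.Hstep n)^[T] v0 := by
    intro t
    induction t with
    | zero => rfl
    | succ t ih =>
      rw [show T + (t+1) = (T + t) + 1 by omega, Function.iterate_succ_apply', ih, hT]
  refine ⟨T, fun t => ?_⟩
  intro α hα
  have h1 := hiter (T + t) hα
  have h2 := hiter T hα
  rw [Set.EqOn] at *
  calc (updateHK^[T + t] f) α = HKP.stepFun n ((HKP.Hstep n)^[T+t] v0) α := h1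
    _ = HKP.stepFun n ((HKP.Hstep n)^[T] v0) α := by rw [hfix t]
    _ = (updateHK^[T] f) α := h2.symm
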